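/- Let P be a finite-dimensional ℚ-vector space, V = P ⊗ ℝ, C a nonempty open convex subset of V, and f : C ∩ P → ℝ a function concave over ℚ. Then for every x ∈ C there exist positive reals ε and L such that the ε-ball U(x, ε) (with respect to a chosen inner product on V) is contained in C and |f(y) − f(z)| ≤ L·‖y − z‖ for all y, z ∈ U(x, ε) ∩ P. Consequently there is a unique concave continuous function f̃ : C → ℝ extending f. -/

import Mathlib

namespace ConcExt

variable {n : ℕ}

def IsRat (x : EuclideanSpace ℝ (Fin n)) : Prop := ∀ i, ∃ q : ℚ, x i = (q : ℝ)

lemma isRat_combo {x y : EuclideanSpace ℝ (Fin n)} (hx : IsRat x) (hy : IsRat y)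
    (a b : ℚ) : IsRat ((a : ℝ) • x + (b : ℝ) • y) := by
  intro i
  obtain ⟨p, hp⟩ := hx i
  obtain ⟨q, hq⟩ := hy i
  refine ⟨a * p + b * q, ?_⟩
  simp [hp, hq]

lemma abs_coord_le (v : EuclideanSpace ℝ (Fin n)) (i : Fin n) : |v i| ≤ ‖v‖ := by
  rw [EuclideanSpace.norm_eq]
  rw [show |v i| = Real.sqrt (‖v i‖^2) by rw [Real.sqrt_sq_eq_abs, Real.norm_eq_abs, abs_abs]]
  apply Real.sqrt_le_sqrt
  exact Finset.single_le_sum (f := fun j => ‖v j‖^2) (fun j _ => by positivity) (Finset.mem_univ i)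

lemma norm_le_of_coords {v : EuclideanSpace ℝ (Fin n)} {b : ℝ} (hb : 0 ≤ b)
    (h : ∀ i, |v i| ≤ b) : ‖v‖ ≤ Real.sqrt n * b := by
  rw [EuclideanSpace.norm_eq]
  calc Real.sqrt (∑ i, ‖v i‖^2) ≤ Real.sqrt (∑ _i : Fin n, b^2) := by
        apply Real.sqrt_le_sqrt; apply Finset.sum_le_sum; intro i _
        have := h i; have := abs_nonneg (v i); rw [Real.norm_eq_abs]; nlinarith
    _ = Real.sqrt n * b := by
        rw [Finset.sum_const, Finset.card_univ, Fintype.card_fin, nsmul_eq_mul,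
          Real.sqrt_mul (by positivity), Real.sqrt_sq hb]

lemma isRat_dense (x : EuclideanSpace ℝ (Fin n)) {ε : ℝ} (hε : 0 < ε) :
    ∃ p : EuclideanSpace ℝ (Fin n), IsRat p ∧ dist p x < ε := by
  have hδ : 0 < ε / (n + 1) := by positivity
  choose q hq using fun i => exists_rat_near (x i) hδ
  set p : EuclideanSpace ℝ (Fin n) := WithLp.toLp 2 (fun i => (q i : ℝ)) with hpdef
  refine ⟨p, fun i => ⟨q i, rfl⟩, ?_⟩
  rw [dist_eq_norm]
  have hb : ∀ i, |(p - x) i| ≤ ε / (n+1) := by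
    intro i
    have h1 : |x i - (q i : ℝ)| < ε / (n+1) := hq i
    have h2 : (p - x) i = (q i : ℝ) - x i := rfl
    rw [h2, abs_sub_comm]
    exact h1.le
  have h1 : ‖p - x‖ ≤ Real.sqrt n * (ε / (n+1)) := norm_le_of_coords hδ.le hb
  have h2 : Real.sqrt n < n + 1 := by
    have := Real.sqrt_lt_sqrt (by positivity : (0:ℝ) ≤ (n:ℝ)) (by nlinarith : (n:ℝ) < ((n:ℝ)+1)^2)
    rwa [Real.sqrt_sq (by positivity)] at this
  calc ‖p - x‖ ≤ Real.sqrt n * (ε / (n+1)) := h1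
    _ < (n+1) * (ε / (n+1)) := mul_lt_mul_of_pos_right h2 hδ
    _ = ε := by field_simp


lemma cube_lb {C : Set (EuclideanSpace ℝ (Fin n))} {f : EuclideanSpace ℝ (Fin n) → ℝ}
    (hf2 : ∀ x : EuclideanSpace ℝ (Fin n), x ∈ C → IsRat x →
      ∀ y : EuclideanSpace ℝ (Fin n), y ∈ C → IsRat y → ∀ t : ℚ, 0 ≤ t → t ≤ 1 →
      f ((t : ℝ) • x + (1 - (t : ℝ)) • y) ≥ (t : ℝ) * f x + (1 - (t : ℝ)) * f y)
    (q0 : EuclideanSpace ℝ (Fin n)) (hq0 : IsRat q0) (h : ℚ) (hh : 0 < h)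
    (hcube : {y : EuclideanSpace ℝ (Fin n) | ∀ i, |y i - q0 i| ≤ (h : ℝ)} ⊆ C)
    (m : ℝ)
    (hm : ∀ σ : Fin n → Bool,
      m ≤ f (WithLp.toLp 2 (fun i => q0 i + (if σ i then (h:ℝ) else -(h:ℝ))))) :
    ∀ p : EuclideanSpace ℝ (Fin n), IsRat p → (∀ i, |p i - q0 i| ≤ (h:ℝ)) → m ≤ f p := by
  have hhR : (0:ℝ) < (h:ℝ) := by exact_mod_cast hh
  suffices H : ∀ k : ℕ, ∀ p : EuclideanSpace ℝ (Fin n), IsRat p →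
      (∀ i, |p i - q0 i| ≤ (h:ℝ)) →
      (∀ i : Fin n, k ≤ i.val → p i = q0 i + (h:ℝ) ∨ p i = q0 i - (h:ℝ)) → m ≤ f p by
    intro p hp hpc
    exact H n p hp hpc (fun i hi => absurd i.isLt (by omega))
  intro k
  induction k with
  | zero =>
    intro p hp hpc hext
    have hp' : p = (WithLp.toLp 2 (fun i => q0 i + (if (decide (p i = q0 i + (h:ℝ))) then (h:ℝ) else -(h:ℝ))) :
        EuclideanSpace ℝ (Fin n)) := by
      ext i
      rcases hext i (Nat.zero_le _) with h1 | h1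
      · simp [h1]
      · have hne' : ¬ ((q0 i - (h:ℝ)) = q0 i + (h:ℝ)) := by intro hc; nlinarith
        simp only [PiLp.toLp_apply, h1, decide_eq_true_eq, if_neg hne']
        ring
    rw [hp']
    exact hm _
  | succ k ih =>
    intro p hp hpc hext
    by_cases hk : k < n
    · set i₀ : Fin n := ⟨k, hk⟩ with hi₀
      obtain ⟨r, hr⟩ := hp i₀
      obtain ⟨s, hs⟩ := hq0 i₀
      set pp : EuclideanSpace ℝ (Fin n) := WithLp.toLp 2 (Function.update p i₀ (q0 i₀ + (h:ℝ))) with hppdef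
      set pm : EuclideanSpace ℝ (Fin n) := WithLp.toLp 2 (Function.update p i₀ (q0 i₀ - (h:ℝ))) with hpmdef
      have hpp_at : pp i₀ = q0 i₀ + (h:ℝ) := Function.update_self _ _ _
      have hpm_at : pm i₀ = q0 i₀ - (h:ℝ) := Function.update_self _ _ _
      have hpp_ne : ∀ i, i ≠ i₀ → pp i = p i := fun i hi => Function.update_of_ne hi _ _
      have hpm_ne : ∀ i, i ≠ i₀ → pm i = p i := fun i hi => Function.update_of_ne hi _ _
      have hppr : IsRat pp := by
        intro i
        by_cases hii : i = i₀
        · subst hii; exact ⟨s + h, by rw [hpp_at, hs]; push_cast; ring⟩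
        · obtain ⟨a, ha⟩ := hp i
          exact ⟨a, by rw [hpp_ne i hii]; exact ha⟩
      have hpmr : IsRat pm := by
        intro i
        by_cases hii : i = i₀
        · subst hii; exact ⟨s - h, by rw [hpm_at, hs]; push_cast; ring⟩
        · obtain ⟨a, ha⟩ := hp i
          exact ⟨a, by rw [hpm_ne i hii]; exact ha⟩
      have hppc : ∀ i, |pp i - q0 i| ≤ (h:ℝ) := by
        intro i
        by_cases hii : i = i₀
        · subst hii; rw [hpp_at]; simp [abs_of_nonneg hhR.le]
        · rw [hpp_ne i hii]; exact hpc i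
      have hpmc : ∀ i, |pm i - q0 i| ≤ (h:ℝ) := by
        intro i
        by_cases hii : i = i₀
        · subst hii; rw [hpm_at]; rw [show q0 i₀ - (h:ℝ) - q0 i₀ = -(h:ℝ) by ring,
            abs_neg, abs_of_nonneg hhR.le]
        · rw [hpm_ne i hii]; exact hpc i
      have hppe : ∀ i : Fin n, k ≤ i.val → pp i = q0 i + (h:ℝ) ∨ pp i = q0 i - (h:ℝ) := by
        intro i hi
        by_cases hii : i = i₀
        · subst hii; exact Or.inl hpp_at
        · rw [hpp_ne i hii]
          exact hext i (by
            have : i.val ≠ k := fun hc => hii (Fin.ext hc)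
            omega)
      have hpme : ∀ i : Fin n, k ≤ i.val → pm i = q0 i + (h:ℝ) ∨ pm i = q0 i - (h:ℝ) := by
        intro i hi
        by_cases hii : i = i₀
        · subst hii; exact Or.inr hpm_at
        · rw [hpm_ne i hii]
          exact hext i (by
            have : i.val ≠ k := fun hc => hii (Fin.ext hc)
            omega)
      have hbd := hpc i₀
      rw [hr, hs] at hbd
      have hbd1 : -(h:ℝ) ≤ (r:ℝ) - (s:ℝ) := (abs_le.1 hbd).1
      have hbd2 : (r:ℝ) - (s:ℝ) ≤ (h:ℝ) := (abs_le.1 hbd).2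
      set t : ℚ := (r - s + h) / (2*h) with htdef
      have ht0 : 0 ≤ t := by
        apply div_nonneg _ (by linarith)
        have : (0:ℝ) ≤ (r:ℝ) - s + h := by linarith
        exact_mod_cast this
      have ht1 : t ≤ 1 := by
        rw [div_le_one (by linarith)]
        have : (r:ℝ) - s + h ≤ 2*h := by linarith
        exact_mod_cast this
      have htR : (t:ℝ) = ((r:ℝ) - s + h)/(2*h) := by rw [htdef]; push_cast; ring
      have hid : ((t:ℝ) • pp + (1 - (t:ℝ)) • pm) = p := by
        ext i
        have hco : ((t:ℝ) • pp + (1 - (t:ℝ)) • pm) i = (t:ℝ) * pp i + (1-(t:ℝ)) * pm i := rfl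
        rw [hco]
        by_cases hii : i = i₀
        · subst hii; rw [hpp_at, hpm_at, hr, hs, htR]
          field_simp
          ring
        · rw [hpp_ne i hii, hpm_ne i hii]; ring
      have h1 := hf2 pp (hcube hppc) hppr pm (hcube hpmc) hpmr t ht0 ht1
      rw [hid] at h1
      have h2 := ih pp hppr hppc hppe
      have h3 := ih pm hpmr hpmc hpme
      have ht0R : (0:ℝ) ≤ (t:ℝ) := by exact_mod_cast ht0
      have ht1R : (t:ℝ) ≤ 1 := by exact_mod_cast ht1
      have e2 : (t:ℝ) * m ≤ (t:ℝ) * f pp := mul_le_mul_of_nonneg_left h2 ht0R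
      have e3 : (1-(t:ℝ)) * m ≤ (1-(t:ℝ)) * f pm :=
        mul_le_mul_of_nonneg_left h3 (by linarith)
      have e4 : (t:ℝ) * m + (1-(t:ℝ)) * m = m := by ring
      linarith
    · exact ih p hp hpc (fun i hi => absurd i.isLt (by omega))


set_option maxHeartbeats 2000000 in
lemma local_lip {C : Set (EuclideanSpace ℝ (Fin n))} (hCo : IsOpen C)
    {f : EuclideanSpace ℝ (Fin n) → ℝ}
    (hf2 : ∀ x : EuclideanSpace ℝ (Fin n), x ∈ C → IsRat x →
      ∀ y : EuclideanSpace ℝ (Fin n), y ∈ C → IsRat y → ∀ t : ℚ, 0 ≤ t → t ≤ 1 →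
      f ((t : ℝ) • x + (1 - (t : ℝ)) • y) ≥ (t : ℝ) * f x + (1 - (t : ℝ)) * f y)
    {x : EuclideanSpace ℝ (Fin n)} (hx : x ∈ C) :
    ∃ ε L : ℝ, 0 < ε ∧ 0 < L ∧ Metric.ball x ε ⊆ C ∧
      ∀ y, y ∈ Metric.ball x ε → IsRat y → ∀ z, z ∈ Metric.ball x ε → IsRat z →
        |f y - f z| ≤ L * dist y z := by
  obtain ⟨r, hr, hball⟩ := Metric.isOpen_iff.1 hCo x hx
  have hB0 : (0:ℝ) < 3 * Real.sqrt n + 1 := by positivity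
  obtain ⟨hq, hq0, hqlt⟩ := exists_rat_btwn (div_pos hr hB0)
  set h : ℝ := (hq:ℝ) with hhdef
  have hh0 : (0:ℝ) < h := hq0
  have hhq0 : (0:ℚ) < hq := by
    have h' := hh0
    rw [hhdef] at h'
    exact_mod_cast h' 
  have hhB : h * (3 * Real.sqrt n + 1) < r := by
    rw [← lt_div_iff₀ hB0]
    exact hqlt
  obtain ⟨q0, hq0rat, hq0dist⟩ := isRat_dense x (half_pos hh0)
  set h3 : ℚ := 3 * hq with h3def
  have h3R : (h3:ℝ) = 3 * h := by rw [h3def]; push_cast; ring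
  have h30 : (0:ℝ) < (h3:ℝ) := by rw [h3R]; linarith
  have h30' : (0:ℚ) < h3 := by exact_mod_cast h30
  set cube : Set (EuclideanSpace ℝ (Fin n)) := {y | ∀ i, |y i - q0 i| ≤ (h3:ℝ)} with hcubedef
  have hsqrtn : (0:ℝ) ≤ Real.sqrt n := Real.sqrt_nonneg _
  have cubeC : cube ⊆ C := by
    intro y hy
    apply hball
    rw [Metric.mem_ball]
    have h1 : dist y q0 ≤ Real.sqrt n * (h3:ℝ) := by
      rw [dist_eq_norm]
      exact norm_le_of_coords h30.le (fun i => hy i)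
    calc dist y x ≤ dist y q0 + dist q0 x := dist_triangle _ _ _
      _ ≤ Real.sqrt n * (h3:ℝ) + h/2 := by linarith
      _ < r := by rw [h3R]; nlinarith
  have ballcube : Metric.ball x h ⊆ cube := by
    intro y hy i
    have e1 : |(y - x) i| ≤ ‖y - x‖ := abs_coord_le _ i
    have e2 : |(x - q0) i| ≤ ‖x - q0‖ := abs_coord_le _ i
    have e3 : ‖y - x‖ < h := by rw [← dist_eq_norm]; exact hy
    have e4 : ‖x - q0‖ < h/2 := by rw [← dist_eq_norm, dist_comm]; exact hq0dist
    have tri : y i - q0 i = (y - x) i + (x - q0) i := by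
      show y i - q0 i = (y i - x i) + (x i - q0 i); ring
    rw [tri, h3R]
    calc |(y - x) i + (x - q0) i| ≤ |(y - x) i| + |(x - q0) i| := abs_add_le _ _
      _ ≤ ‖y - x‖ + ‖x - q0‖ := by linarith
      _ ≤ 3 * h := by linarith
  have hvmem : ∀ σ : Fin n → Bool,
      (WithLp.toLp 2 (fun i => q0 i + (if σ i then (h3:ℝ) else -(h3:ℝ))) : EuclideanSpace ℝ (Fin n)) ∈ cube := by
    intro σ i
    show |(q0 i + (if σ i then (h3:ℝ) else -(h3:ℝ))) - q0 i| ≤ (h3:ℝ)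
    rcases Bool.dichotomy (σ i) with hσ | hσ <;> simp [hσ, abs_of_nonneg h30.le]
  set m : ℝ := (Finset.univ : Finset (Fin n → Bool)).inf' Finset.univ_nonempty
      (fun σ => f (WithLp.toLp 2 (fun i => q0 i + (if σ i then (h3:ℝ) else -(h3:ℝ))))) with hmdef
  have hm : ∀ σ : Fin n → Bool,
      m ≤ f (WithLp.toLp 2 (fun i => q0 i + (if σ i then (h3:ℝ) else -(h3:ℝ)))) :=
    fun σ => Finset.inf'_le _ (Finset.mem_univ σ)
  have lower := cube_lb hf2 q0 hq0rat h3 h30' cubeC m hm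
  have hq0cube : q0 ∈ cube := fun i => by
    show |q0 i - q0 i| ≤ (h3:ℝ); simp [h30.le]
  have hupper : ∀ p, IsRat p → p ∈ cube → f p ≤ 2 * f q0 - m := by
    intro p hpr hpc
    set p' : EuclideanSpace ℝ (Fin n) := (((2:ℚ)):ℝ) • q0 + (((-1:ℚ)):ℝ) • p with hp'def
    have hp'r : IsRat p' := isRat_combo hq0rat hpr 2 (-1)
    have hp'i : ∀ i, p' i = 2 * q0 i - p i := by
      intro i
      show (((2:ℚ)):ℝ) * q0 i + (((-1:ℚ)):ℝ) * p i = 2 * q0 i - p i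
      push_cast; ring
    have hp'c : p' ∈ cube := by
      intro i
      rw [hp'i i]
      have := hpc i
      rw [show 2 * q0 i - p i - q0 i = -(p i - q0 i) by ring, abs_neg]
      exact this
    have hid : (((1/2:ℚ)):ℝ) • p + (1 - ((1/2:ℚ):ℝ)) • p' = q0 := by
      ext i
      show ((1/2:ℚ):ℝ) * p i + (1 - ((1/2:ℚ):ℝ)) * p' i = q0 i
      rw [hp'i i]; push_cast; ring
    have hcf := hf2 p (cubeC hpc) hpr p' (cubeC hp'c) hp'r (1/2) (by norm_num) (by norm_num)
    rw [hid] at hcf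
    have hm' : m ≤ f p' := lower p' hp'r hp'c
    push_cast at hcf
    linarith
  set M : ℝ := max |m| |2 * f q0 - m| + 1 with hMdef
  have hM0 : 0 < M := by
    have : (0:ℝ) ≤ max |m| |2 * f q0 - m| := le_trans (abs_nonneg m) (le_max_left _ _)
    linarith
  have habs : ∀ p, IsRat p → p ∈ cube → |f p| ≤ M := by
    intro p hpr hpc
    have l1 := lower p hpr hpc
    have l2 := hupper p hpr hpc
    rw [abs_le]
    constructor
    · have := neg_abs_le m
      have := le_max_left |m| |2 * f q0 - m|
      linarith
    · have := le_abs_self (2 * f q0 - m)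
      have := le_max_right |m| |2 * f q0 - m|
      linarith
  have hball2 : Metric.ball x (h/2) ⊆ cube :=
    subset_trans (Metric.ball_subset_ball (by linarith)) ballcube
  refine ⟨h/2, 8*M/h, by positivity, by positivity, subset_trans hball2 cubeC, ?_⟩
  have key : ∀ y, y ∈ Metric.ball x (h/2) → IsRat y → ∀ z, z ∈ Metric.ball x (h/2) → IsRat z →
      f z - f y ≤ (8*M/h) * dist y z := by
    intro y hy hyr z hz hzr
    by_cases hyz : y = z
    · subst hyz; simp
    · have hd0 : 0 < dist y z := dist_pos.2 hyz
      set d : ℝ := dist y z with hddef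
      have hdh : d < h := by
        have t1 : dist y x < h/2 := hy
        have t2 : dist z x < h/2 := hz
        calc d ≤ dist y x + dist x z := dist_triangle _ _ _
          _ < h/2 + h/2 := by rw [dist_comm x z]; linarith
          _ = h := by ring
      have hlt : (h/2)/(2*d) < (h/2)/d :=
        div_lt_div_of_pos_left (by positivity) hd0 (by linarith)
      obtain ⟨s, hs1, hs2⟩ := exists_rat_btwn hlt
      have hs0 : (0:ℝ) < (s:ℝ) := lt_trans (by positivity) hs1
      have hs0' : (0:ℚ) < s := by exact_mod_cast hs0
      set w : EuclideanSpace ℝ (Fin n) := (((1+s:ℚ)):ℝ) • y + (((-s:ℚ)):ℝ) • z with hwdef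
      have hwr : IsRat w := isRat_combo hyr hzr (1+s) (-s)
      have e : w - x = (y - x) + (s:ℝ) • (y - z) := by
        ext i
        show ((1+s:ℚ):ℝ) * y i + ((-s:ℚ):ℝ) * z i - x i = (y i - x i) + (s:ℝ) * (y i - z i)
        push_cast; ring
      have hsd : (s:ℝ) * d < h/2 := by
        have := (lt_div_iff₀ hd0).1 hs2
        linarith
      have hwx : dist w x < h := by
        rw [dist_eq_norm, e]
        calc ‖(y-x) + (s:ℝ)•(y-z)‖ ≤ ‖y-x‖ + ‖(s:ℝ)•(y-z)‖ := norm_add_le _ _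
          _ = ‖y-x‖ + (s:ℝ)*d := by
              rw [norm_smul, Real.norm_eq_abs, abs_of_pos hs0, hddef, dist_eq_norm]
          _ < h/2 + h/2 := by
              have h1 : ‖y-x‖ < h/2 := by rw [← dist_eq_norm]; exact hy
              linarith
          _ = h := by ring
      have hwcube : w ∈ cube := ballcube (Metric.mem_ball.2 hwx)
      set t : ℚ := 1/(1+s) with htdef
      have h1s : (0:ℚ) < 1 + s := by linarith
      have ht0 : 0 ≤ t := by positivity
      have ht1 : t ≤ 1 := by rw [htdef, div_le_one h1s]; linarith
      have ht0R : (0:ℝ) ≤ (t:ℝ) := by exact_mod_cast ht0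
      have h1sR : (0:ℝ) < 1 + (s:ℝ) := by linarith
      have htR : (t:ℝ) = 1/(1+(s:ℝ)) := by rw [htdef]; push_cast; ring
      have c1 : (t:ℝ) * ((1+s:ℚ):ℝ) = 1 := by
        rw [htR]; push_cast; field_simp
      have c2 : (t:ℝ) * ((-s:ℚ):ℝ) + (1 - (t:ℝ)) = 0 := by
        rw [htR]; push_cast; field_simp; ring
      have hid : ((t:ℝ) • w + (1 - (t:ℝ)) • z) = y := by
        calc (t:ℝ) • w + (1 - (t:ℝ)) • z
            = ((t:ℝ)*((1+s:ℚ):ℝ)) • y + (((t:ℝ)*((-s:ℚ):ℝ)) + (1 - (t:ℝ))) • z := by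
              rw [hwdef, smul_add, smul_smul, smul_smul, add_assoc, ← add_smul]
          _ = y := by rw [c1, c2, one_smul, zero_smul, add_zero]
      have hcf := hf2 w (cubeC hwcube) hwr z (cubeC (hball2 hz)) hzr t ht0 ht1
      rw [hid] at hcf
      have hfw := habs w hwr hwcube
      have hfz := habs z hzr (hball2 hz)
      have htle : (t:ℝ) ≤ 4*d/h := by
        have e1 : (t:ℝ) ≤ 1/(s:ℝ) := by
          rw [htR]
          apply one_div_le_one_div_of_le hs0
          linarith
        have e2 : 1/(s:ℝ) < 4*d/h := by
          rw [div_lt_div_iff₀ hs0 hh0]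
          have := (div_lt_iff₀ (by positivity : (0:ℝ) < 2*d)).1 hs1
          nlinarith
        linarith
      have hzw : f z - f w ≤ 2*M := by
        have a1 := abs_le.1 hfw
        have a2 := abs_le.1 hfz
        linarith [a1.1, a1.2, a2.1, a2.2]
      have g1 : f z - f y ≤ (t:ℝ) * (f z - f w) := by nlinarith [hcf]
      have g2 : (t:ℝ) * (f z - f w) ≤ (t:ℝ) * (2*M) := mul_le_mul_of_nonneg_left hzw ht0R
      have g3 : (t:ℝ) * (2*M) ≤ (4*d/h) * (2*M) := by
        apply mul_le_mul_of_nonneg_right htle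
        linarith
      have g4 : (4*d/h) * (2*M) = (8*M/h) * d := by field_simp; ring
      calc f z - f y ≤ (t:ℝ) * (f z - f w) := g1
        _ ≤ (t:ℝ) * (2*M) := g2
        _ ≤ (4*d/h) * (2*M) := g3
        _ = (8*M/h) * d := g4
  intro y hy hyr z hz hzr
  rw [abs_sub_le_iff]
  constructor
  · have := key z hz hzr y hy hyr
    rw [dist_comm] at this
    exact this
  · exact key y hy hyr z hz hzr

open Filter Topology

lemma nhds_neBot {C : Set (EuclideanSpace ℝ (Fin n))} (hCo : IsOpen C)
    {x : EuclideanSpace ℝ (Fin n)} (hx : x ∈ C) :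
    (𝓝[C ∩ {p | IsRat p}] x).NeBot := by
  rw [← mem_closure_iff_nhdsWithin_neBot, Metric.mem_closure_iff]
  intro η hη
  obtain ⟨r, hr, hball⟩ := Metric.isOpen_iff.1 hCo x hx
  obtain ⟨p, hpr, hpd⟩ := isRat_dense x (lt_min hη hr)
  refine ⟨p, ⟨hball (Metric.mem_ball.2 (lt_of_lt_of_le hpd (min_le_right _ _))), hpr⟩, ?_⟩
  rw [dist_comm]
  exact lt_of_lt_of_le hpd (min_le_left _ _)

noncomputable def ext (C : Set (EuclideanSpace ℝ (Fin n)))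
    (f : EuclideanSpace ℝ (Fin n) → ℝ) : EuclideanSpace ℝ (Fin n) → ℝ :=
  fun v => limUnder (𝓝[C ∩ {p | IsRat p}] v) f

set_option maxHeartbeats 1000000 in
lemma tendsto_ext {C : Set (EuclideanSpace ℝ (Fin n))} (hCo : IsOpen C)
    {f : EuclideanSpace ℝ (Fin n) → ℝ}
    (hf2 : ∀ x : EuclideanSpace ℝ (Fin n), x ∈ C → IsRat x →
      ∀ y : EuclideanSpace ℝ (Fin n), y ∈ C → IsRat y → ∀ t : ℚ, 0 ≤ t → t ≤ 1 →
      f ((t : ℝ) • x + (1 - (t : ℝ)) • y) ≥ (t : ℝ) * f x + (1 - (t : ℝ)) * f y)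
    {x : EuclideanSpace ℝ (Fin n)} (hx : x ∈ C) :
    Filter.Tendsto f (𝓝[C ∩ {p | IsRat p}] x) (𝓝 (ext C f x)) := by
  haveI hnb := nhds_neBot hCo hx
  unfold ext
  obtain ⟨ε, L, hε, hL, hsub, hlip⟩ := local_lip hCo hf2 hx
  apply tendsto_nhds_limUnder
  have hc : Cauchy (Filter.map f (𝓝[C ∩ {p | IsRat p}] x)) := by
    rw [Metric.cauchy_iff]
    refine ⟨Filter.NeBot.map hnb f, fun η hη => ?_⟩
    set δ : ℝ := min ε (η / (2*(L+1))) with hδdef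
    have hδ0 : 0 < δ := lt_min hε (by positivity)
    refine ⟨f '' (Metric.ball x δ ∩ (C ∩ {p | IsRat p})), ?_, ?_⟩
    · apply Filter.image_mem_map
      exact Filter.inter_mem
        (mem_nhdsWithin_of_mem_nhds (Metric.ball_mem_nhds x hδ0)) self_mem_nhdsWithin
    · rintro a ⟨u, ⟨hu1, hu2, hu3⟩, rfl⟩ b ⟨v, ⟨hv1, hv2, hv3⟩, rfl⟩
      have hub : u ∈ Metric.ball x ε :=
        Metric.mem_ball.2 (lt_of_lt_of_le (Metric.mem_ball.1 hu1) (min_le_left _ _))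
      have hvb : v ∈ Metric.ball x ε :=
        Metric.mem_ball.2 (lt_of_lt_of_le (Metric.mem_ball.1 hv1) (min_le_left _ _))
      have hlipuv := hlip u hub hu3 v hvb hv3
      have hduv : dist u v < 2*δ := by
        calc dist u v ≤ dist u x + dist x v := dist_triangle _ _ _
          _ < δ + δ := by
              rw [dist_comm x v]
              exact add_lt_add (Metric.mem_ball.1 hu1) (Metric.mem_ball.1 hv1)
          _ = 2*δ := by ring
      rw [Real.dist_eq]
      have hδle : δ ≤ η / (2*(L+1)) := min_le_right _ _
      have hfin : L * (2 * (η / (2*(L+1)))) < η := by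
        rw [show L * (2 * (η / (2*(L+1)))) = η * (L/(L+1)) by field_simp]
        have hq : L/(L+1) < 1 := (div_lt_one (by linarith)).2 (by linarith)
        nlinarith
      calc |f u - f v| ≤ L * dist u v := hlipuv
        _ < L * (2*δ) := by
            apply mul_lt_mul_of_pos_left _ hL
            linarith
        _ ≤ L * (2 * (η / (2*(L+1)))) := by
            apply mul_le_mul_of_nonneg_left _ hL.le
            linarith
        _ < η := hfin
  obtain ⟨c, hc'⟩ := CompleteSpace.complete hc
  exact ⟨c, hc'⟩

lemma ext_eq {C : Set (EuclideanSpace ℝ (Fin n))} (hCo : IsOpen C)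
    {f : EuclideanSpace ℝ (Fin n) → ℝ}
    (hf2 : ∀ x : EuclideanSpace ℝ (Fin n), x ∈ C → IsRat x →
      ∀ y : EuclideanSpace ℝ (Fin n), y ∈ C → IsRat y → ∀ t : ℚ, 0 ≤ t → t ≤ 1 →
      f ((t : ℝ) • x + (1 - (t : ℝ)) • y) ≥ (t : ℝ) * f x + (1 - (t : ℝ)) * f y)
    {x : EuclideanSpace ℝ (Fin n)} (hx : x ∈ C) (hxr : IsRat x) : ext C f x = f x := by
  haveI := nhds_neBot hCo hx
  unfold ext
  apply Filter.Tendsto.limUnder_eq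
  rw [Metric.tendsto_nhdsWithin_nhds]
  intro η hη
  obtain ⟨ε, L, hε, hL, hsub, hlip⟩ := local_lip hCo hf2 hx
  refine ⟨min ε (η/(L+1)), lt_min hε (by positivity), ?_⟩
  rintro y ⟨hyC, hyr⟩ hyd
  have hyb : y ∈ Metric.ball x ε :=
    Metric.mem_ball.2 (lt_of_lt_of_le hyd (min_le_left _ _))
  have hxb : x ∈ Metric.ball x ε := Metric.mem_ball_self hε
  have hl := hlip y hyb hyr x hxb hxr
  rw [Real.dist_eq]
  have h3 : dist y x < η/(L+1) := lt_of_lt_of_le hyd (min_le_right _ _)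
  have h4 : L * (η/(L+1)) < η := by
    rw [show L * (η/(L+1)) = η * (L/(L+1)) by field_simp]
    have hq : L/(L+1) < 1 := (div_lt_one (by linarith)).2 (by linarith)
    nlinarith
  have h5 : L * dist y x < L * (η/(L+1)) := mul_lt_mul_of_pos_left h3 hL
  linarith

set_option maxHeartbeats 1000000 in
lemma ext_lip {C : Set (EuclideanSpace ℝ (Fin n))} (hCo : IsOpen C)
    {f : EuclideanSpace ℝ (Fin n) → ℝ}
    (hf2 : ∀ x : EuclideanSpace ℝ (Fin n), x ∈ C → IsRat x →
      ∀ y : EuclideanSpace ℝ (Fin n), y ∈ C → IsRat y → ∀ t : ℚ, 0 ≤ t → t ≤ 1 →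
      f ((t : ℝ) • x + (1 - (t : ℝ)) • y) ≥ (t : ℝ) * f x + (1 - (t : ℝ)) * f y)
    {x : EuclideanSpace ℝ (Fin n)} (hx : x ∈ C) :
    ∃ ε L : ℝ, 0 < ε ∧ 0 < L ∧ Metric.ball x ε ⊆ C ∧
      ∀ y ∈ Metric.ball x ε, ∀ z ∈ Metric.ball x ε,
        |ext C f y - ext C f z| ≤ L * dist y z := by
  obtain ⟨ε, L, hε, hL, hsub, hlip⟩ := local_lip hCo hf2 hx
  refine ⟨ε, L, hε, hL, hsub, ?_⟩
  intro y hy z hz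
  have hyC : y ∈ C := hsub hy
  have hzC : z ∈ C := hsub hz
  refine le_of_forall_pos_le_add ?_
  intro η hη
  set θ : ℝ := η/(4*(L+1)) with hθdef
  have hθ0 : 0 < θ := by positivity
  haveI := nhds_neBot hCo hyC
  haveI := nhds_neBot hCo hzC
  have h1 : ∀ᶠ p in 𝓝[C ∩ {p | IsRat p}] y, |f p - ext C f y| < η/4 := by
    have := Metric.tendsto_nhds.1 (tendsto_ext hCo hf2 hyC) (η/4) (by positivity)
    filter_upwards [this] with p hp
    rw [← Real.dist_eq]
    exact hp
  have h2 : ∀ᶠ p in 𝓝[C ∩ {p | IsRat p}] y, p ∈ Metric.ball x ε :=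
    mem_nhdsWithin_of_mem_nhds (Metric.isOpen_ball.mem_nhds hy)
  have h3 : ∀ᶠ p in 𝓝[C ∩ {p | IsRat p}] y, dist p y < θ :=
    mem_nhdsWithin_of_mem_nhds (Metric.ball_mem_nhds y hθ0)
  have h4 : ∀ᶠ p in 𝓝[C ∩ {p | IsRat p}] y, p ∈ C ∩ {p | IsRat p} := by
    filter_upwards [self_mem_nhdsWithin] with p hp
    exact hp
  obtain ⟨p, hp1, hp2, hp3, hp4⟩ := (h1.and (h2.and (h3.and h4))).exists
  have h1' : ∀ᶠ p in 𝓝[C ∩ {p | IsRat p}] z, |f p - ext C f z| < η/4 := by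
    have := Metric.tendsto_nhds.1 (tendsto_ext hCo hf2 hzC) (η/4) (by positivity)
    filter_upwards [this] with p hp
    rw [← Real.dist_eq]
    exact hp
  have h2' : ∀ᶠ p in 𝓝[C ∩ {p | IsRat p}] z, p ∈ Metric.ball x ε :=
    mem_nhdsWithin_of_mem_nhds (Metric.isOpen_ball.mem_nhds hz)
  have h3' : ∀ᶠ p in 𝓝[C ∩ {p | IsRat p}] z, dist p z < θ :=
    mem_nhdsWithin_of_mem_nhds (Metric.ball_mem_nhds z hθ0)
  have h4' : ∀ᶠ p in 𝓝[C ∩ {p | IsRat p}] z, p ∈ C ∩ {p | IsRat p} := by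
    filter_upwards [self_mem_nhdsWithin] with p hp
    exact hp
  obtain ⟨p', hq1, hq2, hq3, hq4⟩ := (h1'.and (h2'.and (h3'.and h4'))).exists
  have hlippq := hlip p hp2 hp4.2 p' hq2 hq4.2
  have htri : dist p p' ≤ dist p y + dist y z + dist z p' := dist_triangle4 _ _ _ _
  have hzp' : dist z p' < θ := by rw [dist_comm]; exact hq3
  have hLθ : L * (dist y z + 2*θ) ≤ L * dist y z + η/2 := by
    have : L * θ ≤ η/4 := by
      rw [hθdef]
      rw [show L * (η/(4*(L+1))) = (η/4) * (L/(L+1)) by field_simp]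
      have hq : L/(L+1) ≤ 1 := (div_le_one (by linarith)).2 (by linarith)
      nlinarith
    nlinarith
  have hLd : L * dist p p' ≤ L * dist y z + η/2 := by
    have : L * dist p p' ≤ L * (dist y z + 2*θ) := by
      apply mul_le_mul_of_nonneg_left _ hL.le
      linarith
    linarith
  calc |ext C f y - ext C f z|
      ≤ |ext C f y - f p| + |f p - ext C f z| := abs_sub_le _ _ _
    _ ≤ |ext C f y - f p| + (|f p - f p'| + |f p' - ext C f z|) := by
        linarith [abs_sub_le (f p) (f p') (ext C f z)]
    _ ≤ η/4 + (L * dist p p' + η/4) := by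
        rw [abs_sub_comm (ext C f y) (f p)]
        rw [abs_sub_comm (f p') (ext C f z)] at *
        linarith [hp1, hq1, hlippq]
    _ ≤ L * dist y z + η := by linarith

lemma ext_contOn {C : Set (EuclideanSpace ℝ (Fin n))} (hCo : IsOpen C)
    {f : EuclideanSpace ℝ (Fin n) → ℝ}
    (hf2 : ∀ x : EuclideanSpace ℝ (Fin n), x ∈ C → IsRat x →
      ∀ y : EuclideanSpace ℝ (Fin n), y ∈ C → IsRat y → ∀ t : ℚ, 0 ≤ t → t ≤ 1 →
      f ((t : ℝ) • x + (1 - (t : ℝ)) • y) ≥ (t : ℝ) * f x + (1 - (t : ℝ)) * f y) :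
    ContinuousOn (ext C f) C := by
  intro x hx
  obtain ⟨ε, L, hε, hL, hsub, hlip⟩ := ext_lip hCo hf2 hx
  rw [Metric.continuousWithinAt_iff]
  intro η hη
  refine ⟨min ε (η/(L+1)), lt_min hε (by positivity), ?_⟩
  intro y _ hyd
  have hyb : y ∈ Metric.ball x ε :=
    Metric.mem_ball.2 (lt_of_lt_of_le hyd (min_le_left _ _))
  have hxb : x ∈ Metric.ball x ε := Metric.mem_ball_self hε
  have hl := hlip y hyb x hxb
  rw [Real.dist_eq]
  have h3 : dist y x < η/(L+1) := lt_of_lt_of_le hyd (min_le_right _ _)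
  have h4 : L * (η/(L+1)) < η := by
    rw [show L * (η/(L+1)) = η * (L/(L+1)) by field_simp]
    have hq : L/(L+1) < 1 := (div_lt_one (by linarith)).2 (by linarith)
    nlinarith
  have h5 : L * dist y x < L * (η/(L+1)) := mul_lt_mul_of_pos_left h3 hL
  linarith

set_option maxHeartbeats 2000000 in
lemma ext_concave {C : Set (EuclideanSpace ℝ (Fin n))} (hCo : IsOpen C) (hCc : Convex ℝ C)
    {f : EuclideanSpace ℝ (Fin n) → ℝ}
    (hf2 : ∀ x : EuclideanSpace ℝ (Fin n), x ∈ C → IsRat x →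
      ∀ y : EuclideanSpace ℝ (Fin n), y ∈ C → IsRat y → ∀ t : ℚ, 0 ≤ t → t ≤ 1 →
      f ((t : ℝ) • x + (1 - (t : ℝ)) • y) ≥ (t : ℝ) * f x + (1 - (t : ℝ)) * f y) :
    ConcaveOn ℝ C (ext C f) := by
  have hcont := ext_contOn hCo hf2
  refine ⟨hCc, ?_⟩
  intro x hx y hy a b ha hb hab
  set g : EuclideanSpace ℝ (Fin n) → ℝ := ext C f with hgdef
  have hu : a • x + b • y ∈ C := hCc hx hy ha hb hab
  rw [smul_eq_mul, smul_eq_mul]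
  refine le_of_forall_pos_le_add ?_
  intro η hη
  have hcu := hcont _ hu
  rw [Metric.continuousWithinAt_iff] at hcu
  obtain ⟨δu, hδu0, hδu⟩ := hcu (η/4) (by positivity)
  have hcx := hcont _ hx
  rw [Metric.continuousWithinAt_iff] at hcx
  obtain ⟨δx, hδx0, hδx⟩ := hcx (η/8) (by positivity)
  have hcy := hcont _ hy
  rw [Metric.continuousWithinAt_iff] at hcy
  obtain ⟨δy, hδy0, hδy⟩ := hcy (η/8) (by positivity)
  obtain ⟨rx, hrx, hbx⟩ := Metric.isOpen_iff.1 hCo x hx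
  obtain ⟨ry, hry, hby⟩ := Metric.isOpen_iff.1 hCo y hy
  set K : ℝ := ‖x‖ + ‖y‖ + 1 with hKdef
  have hK : 0 < K := by positivity
  set s0 : ℝ := min (δu/(4*K)) (η/(8*(|g x| + |g y| + 1))) with hs0def
  have hs00 : 0 < s0 := lt_min (by positivity) (by positivity)
  have hs0a : s0 ≤ δu/(4*K) := min_le_left _ _
  have hs0b : s0 ≤ η/(8*(|g x| + |g y| + 1)) := min_le_right _ _
  clear_value s0
  have ha1 : a ≤ 1 := by linarith
  have hT : ∃ t : ℚ, 0 ≤ (t:ℝ) ∧ (t:ℝ) ≤ 1 ∧ |(t:ℝ) - a| < s0 := by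
    rcases eq_or_lt_of_le ha1 with heq | hlt
    · refine ⟨1, by norm_num, by norm_num, ?_⟩
      push_cast
      rw [heq]
      simpa using hs00
    · obtain ⟨t, ht1, ht2⟩ := exists_rat_btwn (lt_min hlt (by linarith : a < a + s0))
      refine ⟨t, le_of_lt (lt_of_le_of_lt ha ht1), ?_, ?_⟩
      · exact le_of_lt (lt_of_lt_of_le ht2 (min_le_left _ _))
      · rw [abs_sub_lt_iff]
        constructor
        · have := lt_of_lt_of_le ht2 (min_le_right _ _)
          linarith
        · linarith
  obtain ⟨t, ht0, ht1, hts⟩ := hT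
  have ht0' : (0:ℚ) ≤ t := by exact_mod_cast ht0
  have ht1' : t ≤ 1 := by exact_mod_cast ht1
  set θx : ℝ := min (δu/4) (min δx rx) with hθxdef
  set θy : ℝ := min (δu/4) (min δy ry) with hθydef
  have hθx0 : 0 < θx := lt_min (by positivity) (lt_min hδx0 hrx)
  have hθy0 : 0 < θy := lt_min (by positivity) (lt_min hδy0 hry)
  obtain ⟨p, hpr, hpd⟩ := isRat_dense x hθx0
  obtain ⟨p', hp'r, hp'd⟩ := isRat_dense y hθy0
  have hpC : p ∈ C := hbx (Metric.mem_ball.2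
    (lt_of_lt_of_le hpd (le_trans (min_le_right _ _) (min_le_right _ _))))
  have hp'C : p' ∈ C := hby (Metric.mem_ball.2
    (lt_of_lt_of_le hp'd (le_trans (min_le_right _ _) (min_le_right _ _))))
  set w : EuclideanSpace ℝ (Fin n) := (t:ℝ) • p + (1 - (t:ℝ)) • p' with hwdef
  have hwC : w ∈ C := hCc hpC hp'C ht0 (by linarith) (by ring)
  have hwr : IsRat w := by
    have hcomb := isRat_combo hpr hp'r t (1-t)
    have hcast : ((1 - t : ℚ):ℝ) = 1 - (t:ℝ) := by push_cast; ring
    rw [hcast] at hcomb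
    exact hcomb
  have iden : w - (a • x + b • y) =
      (t:ℝ) • (p - x) + (1 - (t:ℝ)) • (p' - y) + ((t:ℝ) - a) • x + (a - (t:ℝ)) • y := by
    ext i
    show (t:ℝ) * p i + (1 - (t:ℝ)) * p' i - (a * x i + b * y i) =
      (t:ℝ) * (p i - x i) + (1 - (t:ℝ)) * (p' i - y i) + ((t:ℝ) - a) * x i + (a - (t:ℝ)) * y i
    linear_combination (-(y i)) * hab
  clear_value w
  have hwu : dist w (a • x + b • y) < δu := by
    rw [dist_eq_norm, iden]
    have n1 : ‖(t:ℝ) • (p - x)‖ = (t:ℝ) * ‖p - x‖ := by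
      rw [norm_smul, Real.norm_eq_abs, abs_of_nonneg ht0]
    have n2 : ‖(1 - (t:ℝ)) • (p' - y)‖ = (1-(t:ℝ)) * ‖p' - y‖ := by
      rw [norm_smul, Real.norm_eq_abs, abs_of_nonneg (by linarith)]
    have n3 : ‖((t:ℝ) - a) • x‖ = |(t:ℝ) - a| * ‖x‖ := by rw [norm_smul, Real.norm_eq_abs]
    have n4 : ‖(a - (t:ℝ)) • y‖ = |(t:ℝ) - a| * ‖y‖ := by
      rw [norm_smul, Real.norm_eq_abs, abs_sub_comm]
    have hpx : ‖p - x‖ < δu/4 := by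
      rw [← dist_eq_norm]; exact lt_of_lt_of_le hpd (min_le_left _ _)
    have hp'y : ‖p' - y‖ < δu/4 := by
      rw [← dist_eq_norm]; exact lt_of_lt_of_le hp'd (min_le_left _ _)
    have hpx0 : 0 ≤ ‖p - x‖ := norm_nonneg _
    have hp'y0 : 0 ≤ ‖p' - y‖ := norm_nonneg _
    have hxK : ‖x‖ ≤ K := by rw [hKdef]; linarith [norm_nonneg y]
    have hyK : ‖y‖ ≤ K := by rw [hKdef]; linarith [norm_nonneg x]
    have hsK : s0 * K ≤ δu/4 := by
      have hKne : K ≠ 0 := ne_of_gt hK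
      calc s0 * K ≤ (δu/(4*K)) * K := mul_le_mul_of_nonneg_right hs0a hK.le
        _ = δu/4 := by field_simp [hKne]
    have b1 : (t:ℝ) * ‖p - x‖ < δu/4 := by nlinarith
    have b2 : (1-(t:ℝ)) * ‖p' - y‖ ≤ δu/4 := by nlinarith
    have b3 : |(t:ℝ) - a| * ‖x‖ ≤ s0 * K :=
      mul_le_mul hts.le hxK (norm_nonneg _) hs00.le
    have b4 : |(t:ℝ) - a| * ‖y‖ ≤ s0 * K :=
      mul_le_mul hts.le hyK (norm_nonneg _) hs00.le
    have big : ‖(t:ℝ) • (p - x) + (1 - (t:ℝ)) • (p' - y) + ((t:ℝ) - a) • x + (a - (t:ℝ)) • y‖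
        ≤ ‖(t:ℝ) • (p - x)‖ + ‖(1 - (t:ℝ)) • (p' - y)‖ + ‖((t:ℝ) - a) • x‖
          + ‖(a - (t:ℝ)) • y‖ := by
      calc ‖(t:ℝ) • (p - x) + (1 - (t:ℝ)) • (p' - y) + ((t:ℝ) - a) • x + (a - (t:ℝ)) • y‖
          ≤ ‖(t:ℝ) • (p - x) + (1 - (t:ℝ)) • (p' - y) + ((t:ℝ) - a) • x‖
            + ‖(a - (t:ℝ)) • y‖ := norm_add_le _ _
        _ ≤ (‖(t:ℝ) • (p - x) + (1 - (t:ℝ)) • (p' - y)‖ + ‖((t:ℝ) - a) • x‖)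
            + ‖(a - (t:ℝ)) • y‖ := by
              linarith [norm_add_le ((t:ℝ) • (p - x) + (1 - (t:ℝ)) • (p' - y)) (((t:ℝ) - a) • x)]
        _ ≤ (‖(t:ℝ) • (p - x)‖ + ‖(1 - (t:ℝ)) • (p' - y)‖ + ‖((t:ℝ) - a) • x‖)
            + ‖(a - (t:ℝ)) • y‖ := by
              linarith [norm_add_le ((t:ℝ) • (p - x)) ((1 - (t:ℝ)) • (p' - y))]
        _ = _ := by ring
    rw [n1, n2, n3, n4] at big
    have hδu4 : 0 < δu/4 := by positivity
    calc ‖(t:ℝ) • (p - x) + (1 - (t:ℝ)) • (p' - y) + ((t:ℝ) - a) • x + (a - (t:ℝ)) • y‖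
        ≤ (t:ℝ) * ‖p - x‖ + (1-(t:ℝ)) * ‖p' - y‖ + |(t:ℝ) - a| * ‖x‖
          + |(t:ℝ) - a| * ‖y‖ := big
      _ < δu := by
          have s1 := add_lt_add_of_lt_of_le b1 b2
          have s2 := add_lt_add_of_lt_of_le s1 b3
          have s3 := add_lt_add_of_lt_of_le s2 b4
          linarith only [s3, hsK]
  have e1 := hδu hwC hwu
  rw [Real.dist_eq] at e1
  have e2 : g w = f w := ext_eq hCo hf2 hwC hwr
  have e3 := hf2 p hpC hpr p' hp'C hp'r t ht0' ht1'
  rw [← hwdef] at e3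
  have e4 : g p = f p := ext_eq hCo hf2 hpC hpr
  have e5 : g p' = f p' := ext_eq hCo hf2 hp'C hp'r
  have e6 := hδx hpC (lt_of_lt_of_le hpd (le_trans (min_le_right _ _) (min_le_left _ _)))
  rw [Real.dist_eq] at e6
  have e7 := hδy hp'C (lt_of_lt_of_le hp'd (le_trans (min_le_right _ _) (min_le_left _ _)))
  rw [Real.dist_eq] at e7
  have hfpgx : g x - η/8 ≤ f p := by
    rw [← e4]
    linarith [(abs_lt.1 e6).1]
  have hfp'gy : g y - η/8 ≤ f p' := by
    rw [← e5]
    linarith [(abs_lt.1 e7).1]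
  have q1 : (t:ℝ) * (g x - η/8) ≤ (t:ℝ) * f p := mul_le_mul_of_nonneg_left hfpgx ht0
  have q2 : (1-(t:ℝ)) * (g y - η/8) ≤ (1-(t:ℝ)) * f p' :=
    mul_le_mul_of_nonneg_left hfp'gy (by linarith)
  have qq : (t:ℝ)*(g x - η/8) + (1-(t:ℝ))*(g y - η/8)
      = (t:ℝ)*g x + (1-(t:ℝ))*g y - η/8 := by ring
  have r0 : ((t:ℝ) - a) * g x = (t:ℝ)*g x - a*g x := by ring
  have r1 : -|((t:ℝ)-a) * g x| ≤ ((t:ℝ)-a) * g x := neg_abs_le _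
  have r2 : |((t:ℝ)-a) * g x| ≤ s0 * |g x| := by
    rw [abs_mul]
    exact mul_le_mul_of_nonneg_right hts.le (abs_nonneg _)
  have r0' : (a - (t:ℝ)) * g y = (1-(t:ℝ))*g y - b*g y := by
    linear_combination (g y) * hab
  have r1' : -|(a - (t:ℝ)) * g y| ≤ (a - (t:ℝ)) * g y := neg_abs_le _
  have r2' : |(a - (t:ℝ)) * g y| ≤ s0 * |g y| := by
    rw [abs_mul, abs_sub_comm]
    exact mul_le_mul_of_nonneg_right hts.le (abs_nonneg _)
  have q6 : s0 * |g x| + s0 * |g y| ≤ η/8 := by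
    have h1 : s0 ≤ η/(8*(|g x| + |g y| + 1)) := hs0b
    have h2 : 0 ≤ |g x| + |g y| := by positivity
    have h3 : s0 * (|g x| + |g y|) ≤ (η/(8*(|g x| + |g y| + 1))) * (|g x| + |g y| + 1) := by
      apply mul_le_mul h1 (by linarith) h2 (by positivity)
    have hgne : |g x| + |g y| + 1 ≠ 0 := by positivity
    have h4 : (η/(8*(|g x| + |g y| + 1))) * (|g x| + |g y| + 1) = η/8 := by
      field_simp [hgne]
    nlinarith
  have e1' : g w - g (a • x + b • y) < η/4 := (abs_lt.1 e1).2
  linarith [e1', e2, e3, q1, q2, qq, r0, r1, r2, r0', r1', r2', q6]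

end ConcExt

open Filter Topology

theorem concave_rational_locally_lipschitz_and_extension (n : ℕ)
    (C : Set (EuclideanSpace ℝ (Fin n))) (hCo : IsOpen C) (hCc : Convex ℝ C)
    (hCne : C.Nonempty) (P : Set (EuclideanSpace ℝ (Fin n)))
    (hP : P = { x : EuclideanSpace ℝ (Fin n) | ∀ i, ∃ q : ℚ, x i = (q : ℝ) })
    (f : EuclideanSpace ℝ (Fin n) → ℝ)
    (hf : ∀ x ∈ C ∩ P, ∀ y ∈ C ∩ P, ∀ t : ℚ, 0 ≤ t → t ≤ 1 →
      f ((t : ℝ) • x + ((1 : ℝ) - (t : ℝ)) • y) ≥ (t : ℝ) * f x + (1 - (t : ℝ)) * f y) :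
    (∀ x ∈ C, ∃ ε L : ℝ, 0 < ε ∧ 0 < L ∧ Metric.ball x ε ⊆ C ∧
      ∀ y ∈ Metric.ball x ε ∩ P, ∀ z ∈ Metric.ball x ε ∩ P,
        |f y - f z| ≤ L * dist y z) ∧
    ∃ g : EuclideanSpace ℝ (Fin n) → ℝ,
      (ConcaveOn ℝ C g ∧ ContinuousOn g C ∧ ∀ x ∈ C ∩ P, g x = f x) ∧
      ∀ g' : EuclideanSpace ℝ (Fin n) → ℝ,
        (ConcaveOn ℝ C g' ∧ ContinuousOn g' C ∧ ∀ x ∈ C ∩ P, g' x = f x) →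
        Set.EqOn g' g C := by
  subst hP
  have hf2 : ∀ x : EuclideanSpace ℝ (Fin n), x ∈ C → ConcExt.IsRat x →
      ∀ y : EuclideanSpace ℝ (Fin n), y ∈ C → ConcExt.IsRat y → ∀ t : ℚ, 0 ≤ t → t ≤ 1 →
      f ((t : ℝ) • x + (1 - (t : ℝ)) • y) ≥ (t : ℝ) * f x + (1 - (t : ℝ)) * f y := by
    intro x hx hxr y hy hyr t ht0 ht1
    exact hf x ⟨hx, hxr⟩ y ⟨hy, hyr⟩ t ht0 ht1
  constructor
  · intro x hx
    obtain ⟨ε, L, hε, hL, hsub, hlip⟩ := ConcExt.local_lip hCo hf2 hx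
    exact ⟨ε, L, hε, hL, hsub, fun y hy z hz => hlip y hy.1 hy.2 z hz.1 hz.2⟩
  · refine ⟨ConcExt.ext C f,
      ⟨ConcExt.ext_concave hCo hCc hf2, ConcExt.ext_contOn hCo hf2,
        fun x hx => ConcExt.ext_eq hCo hf2 hx.1 hx.2⟩, ?_⟩
    rintro g' ⟨hg'c, hg'cont, hg'eq⟩ x hx
    haveI := ConcExt.nhds_neBot hCo hx
    have t1 : Tendsto g' (𝓝[C ∩ {p | ConcExt.IsRat p}] x) (𝓝 (g' x)) :=
      (hg'cont x hx).mono_left (nhdsWithin_mono x Set.inter_subset_left)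
    have hev : g' =ᶠ[𝓝[C ∩ {p | ConcExt.IsRat p}] x] f := by
      filter_upwards [self_mem_nhdsWithin] with p hp
      exact hg'eq p ⟨hp.1, hp.2⟩
    have t2 : Tendsto f (𝓝[C ∩ {p | ConcExt.IsRat p}] x) (𝓝 (g' x)) :=
      Filter.Tendsto.congr' hev t1
    have t3 := ConcExt.tendsto_ext hCo hf2 hx
    exact tendsto_nhds_unique t2 t3
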